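/- arXiv:2010.12665 — 2 statements merged into one kernel-verified Lean document; each statement's English description precedes it below -/
import Mathlib

section
/- Let ω = (5 + i√11)/6 ∈ ℂ, which satisfies |ω| = 1. Let S ⊆ ℂ be finite and let p, q ∈ S be a monochromatic pair of S (every proper 4-coloring of the unit-distance graph on S assigns p and q the same color). Set q′ = p + ω·(q − p) and S′ = S ∪ {p + ω·(z − p) : z ∈ S}. Then |q − q′| = |q − p|/√3, and {q, q′} is a monochromatic pair of S′: every proper 4-coloring of the unit-distance graph on S′ assigns q and q′ the same color. In particular, from a mono-pair of length r one obtains a mono-pair of length r/√3. -/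
noncomputable def omegaRot : ℂ := (5 + (Real.sqrt 11 : ℝ) * Complex.I) / 6

lemma normSq_omega : Complex.normSq omegaRot = 1 := by
  have h11 : Real.sqrt 11 ^ 2 = 11 := Real.sq_sqrt (by norm_num)
  simp only [omegaRot, Complex.normSq_apply, Complex.div_re, Complex.div_im,
    Complex.add_re, Complex.add_im, Complex.mul_re, Complex.mul_im,
    Complex.I_re, Complex.I_im, Complex.ofReal_re, Complex.ofReal_im, Complex.re_ofNat, Complex.im_ofNat]
  nlinarith [h11]

lemma abs_omega : ‖omegaRot‖ = 1 := by
  rw [Complex.norm_def, normSq_omega, Real.sqrt_one]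

lemma abs_one_sub : ‖1 - omegaRot‖ = 1 / Real.sqrt 3 := by
  have h11 : Real.sqrt 11 ^ 2 = 11 := Real.sq_sqrt (by norm_num)
  have : Complex.normSq (1 - omegaRot) = 1/3 := by
    simp only [omegaRot, Complex.normSq_apply, Complex.sub_re, Complex.sub_im,
      Complex.div_re, Complex.div_im, Complex.add_re, Complex.add_im,
      Complex.mul_re, Complex.mul_im, Complex.I_re, Complex.I_im,
      Complex.ofReal_re, Complex.ofReal_im, Complex.one_re, Complex.one_im, Complex.re_ofNat, Complex.im_ofNat]
    nlinarith [h11]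
  rw [Complex.norm_def, this, one_div, one_div, ← Real.sqrt_inv]

theorem stmt_16 (S : Set ℂ) (hS : S.Finite) (p q : ℂ) (hp : p ∈ S) (hq : q ∈ S)
    (hmono : ∀ c : ℂ → Fin 4,
      (∀ x ∈ S, ∀ y ∈ S, dist x y = 1 → c x ≠ c y) → c p = c q) :
    ‖omegaRot‖ = 1 ∧
    ‖q - (p + omegaRot * (q - p))‖ = ‖q - p‖ / Real.sqrt 3 ∧
    (∀ c : ℂ → Fin 4,
      (∀ x ∈ S ∪ (fun z => p + omegaRot * (z - p)) '' S,
       ∀ y ∈ S ∪ (fun z => p + omegaRot * (z - p)) '' S,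
        dist x y = 1 → c x ≠ c y) →
      c q = c (p + omegaRot * (q - p))) := by
  refine ⟨abs_omega, ?_, ?_⟩
  · have : q - (p + omegaRot * (q - p)) = (1 - omegaRot) * (q - p) := by ring
    rw [this, norm_mul, abs_one_sub]
    ring
  · intro c hc
    have h1 : c p = c q := hmono c (fun x hx y hy hxy => hc x (Or.inl hx) y (Or.inl hy) hxy)
    have h2 : c p = c (p + omegaRot * (q - p)) := by
      have := hmono (fun z => c (p + omegaRot * (z - p))) (fun x hx y hy hxy => by
        apply hc _ (Or.inr ⟨x, hx, rfl⟩) _ (Or.inr ⟨y, hy, rfl⟩)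
        rw [Complex.dist_eq] at hxy ⊢
        have : p + omegaRot * (x - p) - (p + omegaRot * (y - p)) = omegaRot * (x - y) := by ring
        rw [this, norm_mul, abs_omega, one_mul, hxy])
      simpa using this
    rw [← h1, h2]
end

section
/- Let S ⊆ ℝ² be finite, let p, q ∈ S be a monochromatic pair of S (every proper 4-coloring of the unit-distance graph on S assigns p and q the same color), and let n be a positive integer. Set v = q − p and S′ = ⋃_{j=0}^{n−1} (S + j·v), where S + j·v denotes the translate of S by j·v. Then the points p and p + n·v satisfy dist(p, p + n·v) = n·dist(p,q), and {p, p + n·v} is a monochromatic pair of S′: every proper 4-coloring of the unit-distance graph on S′ assigns p and p + n·v the same color. In particular, from a mono-pair of length r one obtains a mono-pair of length n·r. -/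
theorem stmt_17 (S : Set (EuclideanSpace ℝ (Fin 2))) (hS : S.Finite) (p q : EuclideanSpace ℝ (Fin 2))
    (hp : p ∈ S) (hq : q ∈ S) (n : ℕ) (hn : 0 < n)
    (hmono : ∀ c : EuclideanSpace ℝ (Fin 2) → Fin 4,
      (∀ x ∈ S, ∀ y ∈ S, dist x y = 1 → c x ≠ c y) → c p = c q) :
    dist p (p + n • (q - p)) = n * dist p q ∧
    (∀ c : EuclideanSpace ℝ (Fin 2) → Fin 4,
      (∀ x ∈ ⋃ j ∈ Finset.range n, (fun x => x + j • (q - p)) '' S,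
       ∀ y ∈ ⋃ j ∈ Finset.range n, (fun x => x + j • (q - p)) '' S,
        dist x y = 1 → c x ≠ c y) →
      c p = c (p + n • (q - p))) := by
  constructor
  · rw [dist_eq_norm, dist_eq_norm]
    have : p - (p + (n : ℕ) • (q - p)) = (n : ℕ) • (p - q) := by
      rw [smul_sub, smul_sub]; abel
    rw [this, ← Nat.cast_smul_eq_nsmul ℝ, norm_smul]
    simp
  · intro c hc
    have step : ∀ j < n, c (p + j • (q - p)) = c (p + (j + 1) • (q - p)) := by
      intro j hj
      have mem : ∀ x ∈ S, x + j • (q - p) ∈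
          ⋃ k ∈ Finset.range n, (fun x => x + k • (q - p)) '' S := by
        intro x hx
        refine Set.mem_iUnion₂.2 ⟨j, Finset.mem_range.2 hj, ⟨x, hx, rfl⟩⟩
      have := hmono (fun x => c (x + j • (q - p))) ?_
      · have hq' : q + j • (q - p) = p + (j + 1) • (q - p) := by
          rw [add_smul, one_smul]; abel
        simpa [hq'] using this
      · intro x hx y hy hxy
        exact hc _ (mem x hx) _ (mem y hy) (by rwa [dist_add_right])
    have main : ∀ m ≤ n, c p = c (p + m • (q - p)) := by
      intro m hm
      induction m with
      | zero => simp
      | succ k ih =>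
        rw [ih (le_of_lt (Nat.lt_of_succ_le hm))]
        exact step k (Nat.lt_of_succ_le hm)
    exact main n le_rfl
end
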